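/- Let α, μ, ĥ, ξ, A₀, Δ > 0 and set Φ = (αμ − ξ)/α and X = μ/(ĥ^α·A₀^α). Then the function x ↦ x^{ξ−1}·ln(1 + Δ·x²)·Γ(Φ, X·x^α) is (Lebesgue) integrable on (0, ∞), where Γ(s,T) = ∫_T^∞ t^{s−1}·e^{−t} dt is the upper incomplete gamma function; consequently the ergodic capacity C = (Θ/ln 2)·∫₀^∞ x^{ξ−1}·ln(1 + Δ·x²)·Γ(Φ, X·x^α) dx is finite. -/

import Mathlib

open Real MeasureTheory

/-- The integrand of the ergodic-capacity integral,
`x ↦ x^{ξ-1}·ln(1+Δx²)·Γ(Φ, X x^α)`, is Lebesgue integrable on `(0,∞)`;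
hence the ergodic capacity is finite. -/
theorem ergodic_capacity_integrand_integrable
    (α μ hhat ξ A₀ Δ : ℝ) (hα : 0 < α) (hμ : 0 < μ) (hhat_pos : 0 < hhat)
    (hξ : 0 < ξ) (hA₀ : 0 < A₀) (hΔ : 0 < Δ)
    (Φ X : ℝ)
    (hΦ : Φ = (α * μ - ξ) / α)
    (hX : X = μ / (hhat ^ α * A₀ ^ α)) :
    MeasureTheory.IntegrableOn
      (fun x : ℝ =>
        x ^ (ξ - 1) * Real.log (1 + Δ * x ^ 2) *
          ∫ t in Set.Ioi (X * x ^ α), t ^ (Φ - 1) * Real.exp (-t))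
      (Set.Ioi (0 : ℝ)) := by
  have hα' : α ≠ 0 := hα.ne'
  set Φ' : ℝ := -(ξ + 1) / α with hΦ'
  set s : ℝ := Φ - Φ' with hs
  have hX0 : 0 < X := by rw [hX]; positivity
  have hΦ'neg : Φ' ≤ 0 := by
    rw [hΦ']
    apply div_nonpos_of_nonpos_of_nonneg <;> linarith
  have hs0 : 0 < s := by
    have : s = (α * μ + 1) / α := by
      rw [hs, hΦ, hΦ']; field_simp; ring
    rw [this]; positivity
  -- the comparison function for the incomplete Gamma integrand
  have hCint : IntegrableOn (fun t : ℝ => t ^ (s - 1) * Real.exp (-(1/2) * t))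
      (Set.Ioi 0) := by
    have h := integrableOn_rpow_mul_exp_neg_mul_rpow (s := s - 1) (p := 1) (b := 1/2)
      (by linarith) one_pos (by norm_num)
    simpa [Real.rpow_one] using h
  set C : ℝ := ∫ t in Set.Ioi (0:ℝ), t ^ (s - 1) * Real.exp (-(1/2) * t) with hC
  have hC0 : 0 ≤ C := by
    apply setIntegral_nonneg measurableSet_Ioi
    intro t ht
    have : (0:ℝ) < t := ht
    positivity
  -- pointwise bound on the Gamma integrand
  have hpt : ∀ T : ℝ, 0 < T → ∀ t ∈ Set.Ioi T,
      t ^ (Φ - 1) * Real.exp (-t) ≤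
        (T ^ Φ' * Real.exp (-(T/2))) * (t ^ (s - 1) * Real.exp (-(1/2) * t)) := by
    intro T hT t ht
    have ht' : T < t := ht
    have ht0 : 0 < t := hT.trans ht'
    have h1 : t ^ (Φ - 1) = t ^ Φ' * t ^ (s - 1) := by
      rw [← Real.rpow_add ht0]; congr 1; rw [hs]; ring
    have h2 : t ^ Φ' ≤ T ^ Φ' := Real.rpow_le_rpow_of_nonpos hT ht'.le hΦ'neg
    have h3 : Real.exp (-t) ≤ Real.exp (-(T/2)) * Real.exp (-(1/2) * t) := by
      rw [← Real.exp_add]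
      apply Real.exp_le_exp.mpr
      linarith
    calc t ^ (Φ - 1) * Real.exp (-t) = (t ^ Φ' * t ^ (s - 1)) * Real.exp (-t) := by rw [h1]
      _ ≤ (T ^ Φ' * t ^ (s - 1)) * (Real.exp (-(T/2)) * Real.exp (-(1/2) * t)) := by
          apply mul_le_mul _ h3 (Real.exp_pos _).le (by positivity)
          exact mul_le_mul_of_nonneg_right h2 (Real.rpow_nonneg ht0.le _)
      _ = (T ^ Φ' * Real.exp (-(T/2))) * (t ^ (s - 1) * Real.exp (-(1/2) * t)) := by ring
  -- integrability of the Gamma integrand on Ioi T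
  have hmeasG : Measurable (fun t : ℝ => t ^ (Φ - 1) * Real.exp (-t)) := by
    fun_prop
  have hGint : ∀ T : ℝ, 0 < T →
      IntegrableOn (fun t : ℝ => t ^ (Φ - 1) * Real.exp (-t)) (Set.Ioi T) := by
    intro T hT
    have hsub : Set.Ioi T ⊆ Set.Ioi (0:ℝ) := Set.Ioi_subset_Ioi hT.le
    apply Integrable.mono' (((hCint.mono_set hsub).const_mul (T ^ Φ' * Real.exp (-(T/2)))))
      hmeasG.aestronglyMeasurable
    filter_upwards [ae_restrict_mem measurableSet_Ioi] with t ht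
    have ht0 : 0 < t := hT.trans ht
    rw [Real.norm_eq_abs, abs_of_nonneg (by positivity)]
    exact hpt T hT t ht
  -- nonnegativity of the incomplete Gamma
  have hG0 : ∀ T : ℝ, 0 < T →
      0 ≤ ∫ t in Set.Ioi T, t ^ (Φ - 1) * Real.exp (-t) := by
    intro T hT
    apply setIntegral_nonneg measurableSet_Ioi
    intro t ht
    have : (0:ℝ) < t := hT.trans ht
    positivity
  -- bound on the incomplete Gamma
  have hGbound : ∀ T : ℝ, 0 < T →
      (∫ t in Set.Ioi T, t ^ (Φ - 1) * Real.exp (-t)) ≤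
        C * (T ^ Φ' * Real.exp (-(T/2))) := by
    intro T hT
    have hsub : Set.Ioi T ⊆ Set.Ioi (0:ℝ) := Set.Ioi_subset_Ioi hT.le
    calc (∫ t in Set.Ioi T, t ^ (Φ - 1) * Real.exp (-t))
        ≤ ∫ t in Set.Ioi T,
            (T ^ Φ' * Real.exp (-(T/2))) * (t ^ (s - 1) * Real.exp (-(1/2) * t)) := by
          apply integral_mono_of_nonneg
          · filter_upwards [ae_restrict_mem measurableSet_Ioi] with t ht
            have : (0:ℝ) < t := hT.trans ht
            positivity
          · exact (hCint.mono_set hsub).const_mul _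
          · filter_upwards [ae_restrict_mem measurableSet_Ioi] with t ht
            exact hpt T hT t ht
      _ = (T ^ Φ' * Real.exp (-(T/2))) *
            ∫ t in Set.Ioi T, t ^ (s - 1) * Real.exp (-(1/2) * t) := by
          rw [integral_const_mul]
      _ ≤ (T ^ Φ' * Real.exp (-(T/2))) * C := by
          apply mul_le_mul_of_nonneg_left _ (by positivity)
          apply setIntegral_mono_set hCint
          · filter_upwards [ae_restrict_mem measurableSet_Ioi] with t ht
            have : (0:ℝ) < t := ht
            positivity
          · exact (Set.Ioi_subset_Ioi hT.le).eventuallyLE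
      _ = C * (T ^ Φ' * Real.exp (-(T/2))) := by ring
  -- the inner integral is antitone in x on (0,∞)
  have hanti : AntitoneOn
      (fun x : ℝ => ∫ t in Set.Ioi (X * x ^ α), t ^ (Φ - 1) * Real.exp (-t))
      (Set.Ioi 0) := by
    intro x hx y hy hxy
    have hx0 : (0:ℝ) < x := hx
    have h1 : 0 < X * x ^ α := by
      have := Real.rpow_pos_of_pos hx0 α; positivity
    have h2 : X * x ^ α ≤ X * y ^ α :=
      mul_le_mul_of_nonneg_left (Real.rpow_le_rpow hx0.le hxy hα.le) hX0.le
    apply setIntegral_mono_set (hGint _ h1)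
    · filter_upwards [ae_restrict_mem measurableSet_Ioi] with t ht
      have : (0:ℝ) < t := h1.trans ht
      positivity
    · exact (Set.Ioi_subset_Ioi h2).eventuallyLE
  -- measurability of the whole integrand
  have hmeasf : AEStronglyMeasurable
      (fun x : ℝ =>
        x ^ (ξ - 1) * Real.log (1 + Δ * x ^ 2) *
          ∫ t in Set.Ioi (X * x ^ α), t ^ (Φ - 1) * Real.exp (-t))
      (volume.restrict (Set.Ioi 0)) := by
    apply AEStronglyMeasurable.mul
    · apply Measurable.aestronglyMeasurable
      apply Measurable.mul
      · fun_prop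
      · exact Real.measurable_log.comp (by fun_prop)
    · exact (aemeasurable_restrict_of_antitoneOn measurableSet_Ioi hanti).aestronglyMeasurable
  -- the dominating function
  have hdom : IntegrableOn (fun x : ℝ => Real.exp (-(X/2) * x ^ α)) (Set.Ioi 0) := by
    have h1 : IntegrableOn (fun u : ℝ => u ^ ((1 - α)/α) * Real.exp (-(X/2) * u))
        (Set.Ioi 0) := by
      have h := integrableOn_rpow_mul_exp_neg_mul_rpow (s := (1 - α)/α) (p := 1) (b := X/2)
        (by rw [lt_div_iff₀ hα]; linarith) one_pos (by positivity)
      simpa [Real.rpow_one] using h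
    have h2 := (integrableOn_Ioi_comp_rpow_iff'
      (fun u : ℝ => u ^ ((1 - α)/α) * Real.exp (-(X/2) * u)) hα').mpr h1
    apply h2.congr_fun _ measurableSet_Ioi
    intro x hx
    have hx0 : (0:ℝ) < x := hx
    have e1 : ((x ^ α) ^ ((1 - α)/α) : ℝ) = x ^ (1 - α) := by
      rw [← Real.rpow_mul hx0.le]
      congr 1
      field_simp
    simp only [smul_eq_mul]
    rw [e1, ← mul_assoc, ← Real.rpow_add hx0]
    norm_num
  set K : ℝ := Δ * X ^ Φ' * C with hK
  apply Integrable.mono' (hdom.const_mul K) hmeasf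
  filter_upwards [ae_restrict_mem measurableSet_Ioi] with x hx
  have hx0 : (0:ℝ) < x := hx
  have hT0 : 0 < X * x ^ α := by
    have := Real.rpow_pos_of_pos hx0 α; positivity
  have hlog0 : 0 ≤ Real.log (1 + Δ * x ^ 2) := Real.log_nonneg (by nlinarith)
  have hlog : Real.log (1 + Δ * x ^ 2) ≤ Δ * x ^ 2 := by
    have := Real.log_le_sub_one_of_pos (show (0:ℝ) < 1 + Δ * x ^ 2 by positivity)
    linarith
  have hfnn : 0 ≤ x ^ (ξ - 1) * Real.log (1 + Δ * x ^ 2) *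
      ∫ t in Set.Ioi (X * x ^ α), t ^ (Φ - 1) * Real.exp (-t) :=
    mul_nonneg (mul_nonneg (Real.rpow_nonneg hx0.le _) hlog0) (hG0 _ hT0)
  rw [Real.norm_eq_abs, abs_of_nonneg hfnn]
  have step1 : x ^ (ξ - 1) * Real.log (1 + Δ * x ^ 2) *
      (∫ t in Set.Ioi (X * x ^ α), t ^ (Φ - 1) * Real.exp (-t)) ≤
      (x ^ (ξ - 1) * (Δ * x ^ 2)) *
        (C * ((X * x ^ α) ^ Φ' * Real.exp (-((X * x ^ α)/2)))) := by
    apply mul_le_mul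
    · exact mul_le_mul_of_nonneg_left hlog (Real.rpow_nonneg hx0.le _)
    · exact hGbound _ hT0
    · exact hG0 _ hT0
    · positivity
  refine step1.trans (le_of_eq ?_)
  have e1 : (X * x ^ α) ^ Φ' = X ^ Φ' * x ^ (α * Φ') := by
    rw [Real.mul_rpow hX0.le (Real.rpow_nonneg hx0.le _), Real.rpow_mul hx0.le]
  have e2 : α * Φ' = -(ξ + 1) := by
    rw [hΦ']; field_simp
  have e3 : x ^ (ξ - 1) * x ^ 2 * x ^ (-(ξ + 1)) = 1 := by
    rw [← Real.rpow_two, ← Real.rpow_add hx0, ← Real.rpow_add hx0,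
      show ξ - 1 + 2 + -(ξ + 1) = (0:ℝ) by ring, Real.rpow_zero]
  have e4 : Real.exp (-((X * x ^ α)/2)) = Real.exp (-(X/2) * x ^ α) := by
    congr 1; ring
  rw [e1, e2, e4, hK]
  linear_combination (Δ * C * X ^ Φ' * Real.exp (-(X / 2) * x ^ α)) * e3
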